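/- Let s ∈ (0,1) and γ = 1 − 2s. On the open upper half-plane H = {(x₁, y) ∈ ℝ² : y > 0} define u₀(x₁, y) = (1/(1−s²)) ρ^{1+s} ( 2 (cos(θ/2))^{2(s+1)} − (1+s)(cos(θ/2))^{2s} ), where ρ = √(x₁² + y²) and θ ∈ (0, π) is the polar angle determined by cos θ = x₁/ρ and sin θ = y/ρ. Then: (i) u₀ satisfies the degenerate Laplace equation Δu₀ + (γ/y) ∂_y u₀ = 0 at every point of H; (ii) u₀ extends continuously to the closed half-plane minus the origin, with boundary values u₀(x₁, 0) = 0 for x₁ < 0 and u₀(x₁, 0) = x₁^{1+s}/(1+s) for x₁ > 0; (iii) u₀ is homogeneous of degree 1 + s, i.e. u₀(λ x₁, λ y) = λ^{1+s} u₀(x₁, y) for all λ > 0 and (x₁,y) ∈ H. -/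

import Mathlib

open MeasureTheory Real

/-- Partial derivative in the first variable for functions on `ℝ²`. -/
noncomputable def pd1 (f : ℝ × ℝ → ℝ) (p : ℝ × ℝ) : ℝ :=
  deriv (fun s : ℝ => f (s, p.2)) p.1

/-- Partial derivative in the second variable for functions on `ℝ²`. -/
noncomputable def pd2 (f : ℝ × ℝ → ℝ) (p : ℝ × ℝ) : ℝ :=
  deriv (fun s : ℝ => f (p.1, s)) p.2

/-- The blow-up profile
`u₀ = (1/(1−s²)) ρ^{1+s} (2 cos^{2(s+1)}(θ/2) − (1+s) cos^{2s}(θ/2))` in polar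
coordinates `ρ = √(x₁²+y²)`, `θ = arccos(x₁/ρ) ∈ (0,π)` on the upper half-plane. -/
noncomputable def u₀ (s : ℝ) (p : ℝ × ℝ) : ℝ :=
  (1 / (1 - s ^ 2)) * (Real.sqrt (p.1 ^ 2 + p.2 ^ 2)) ^ (1 + s) *
    (2 * (Real.cos (Real.arccos (p.1 / Real.sqrt (p.1 ^ 2 + p.2 ^ 2)) / 2)) ^ (2 * (s + 1))
      - (1 + s) * (Real.cos (Real.arccos (p.1 / Real.sqrt (p.1 ^ 2 + p.2 ^ 2)) / 2)) ^ (2 * s))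

/-- Closed form for `u₀`. -/
noncomputable def F (s : ℝ) (p : ℝ × ℝ) : ℝ :=
  (2:ℝ) ^ (-s) / (1 - s ^ 2) *
    ((Real.sqrt (p.1 ^ 2 + p.2 ^ 2) + p.1) ^ s * (p.1 - s * Real.sqrt (p.1 ^ 2 + p.2 ^ 2)))

lemma u0_eq_F (s : ℝ) (hs : s ∈ Set.Ioo (0:ℝ) 1) (p : ℝ × ℝ) : u₀ s p = F s p := by
  obtain ⟨hs0, hs1⟩ := hs
  obtain ⟨x, y⟩ := p
  by_cases h0 : x ^ 2 + y ^ 2 = 0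
  · have hx : x = 0 := by nlinarith [sq_nonneg x, sq_nonneg y]
    have hy : y = 0 := by nlinarith [sq_nonneg x, sq_nonneg y]
    subst hx; subst hy
    simp [u₀, F, Real.zero_rpow (by positivity : (1:ℝ) + s ≠ 0),
      Real.zero_rpow hs0.ne']
  · have hsum : 0 < x ^ 2 + y ^ 2 := lt_of_le_of_ne (by positivity) (Ne.symm h0)
    set ρ := Real.sqrt (x ^ 2 + y ^ 2) with hρdef
    have hρ : 0 < ρ := Real.sqrt_pos.mpr hsum
    have hρ2 : ρ ^ 2 = x ^ 2 + y ^ 2 := Real.sq_sqrt hsum.le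
    have hxle : |x| ≤ ρ := by
      rw [abs_le]
      constructor <;> nlinarith
    have habs : |x / ρ| ≤ 1 := by
      rw [abs_div, abs_of_pos hρ, div_le_one hρ]; exact hxle
    have hcosθ : Real.cos (Real.arccos (x / ρ)) = x / ρ :=
      Real.cos_arccos (neg_le_of_abs_le habs) (le_of_abs_le habs)
    have hθmem : Real.arccos (x/ρ) ∈ Set.Icc 0 π := ⟨Real.arccos_nonneg _, Real.arccos_le_pi _⟩
    have hchalf : Real.cos (Real.arccos (x / ρ) / 2)
        = Real.sqrt ((ρ + x) / (2 * ρ)) := by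
      rw [Real.cos_half (by linarith [hθmem.1, Real.pi_pos]) hθmem.2, hcosθ]
      congr 1
      rw [div_eq_div_iff (by norm_num) (by positivity)]
      field_simp
    have hTnn : (0:ℝ) ≤ (ρ + x) / (2 * ρ) := by
      apply div_nonneg _ (by positivity)
      nlinarith [neg_abs_le x]
    have hAnn : (0:ℝ) ≤ ρ + x := by nlinarith [neg_abs_le x]
    have hpow : ∀ t : ℝ, Real.sqrt ((ρ + x) / (2 * ρ)) ^ (2 * t) = ((ρ + x) / (2 * ρ)) ^ t := by
      intro t
      have h1 : Real.sqrt ((ρ + x) / (2 * ρ)) ^ (2 * t)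
          = ((Real.sqrt ((ρ + x) / (2 * ρ)) ^ (2:ℕ) : ℝ)) ^ t := by
        rw [← Real.rpow_natCast (Real.sqrt ((ρ + x) / (2 * ρ))) 2,
          ← Real.rpow_mul (Real.sqrt_nonneg _)]
        norm_num
      rw [h1, Real.sq_sqrt hTnn]
    have hTs1 : ((ρ + x) / (2 * ρ)) ^ (s+1) = ((ρ + x) / (2 * ρ)) ^ s * ((ρ + x) / (2 * ρ)) := by
      rw [Real.rpow_add' hTnn (by positivity), Real.rpow_one]
    have hTs : ((ρ + x) / (2 * ρ)) ^ s = (ρ + x) ^ s / ((2:ℝ) ^ s * ρ ^ s) := by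
      rw [Real.div_rpow hAnn (by positivity), Real.mul_rpow (by norm_num) hρ.le]
    have hρ1s : ρ ^ (1 + s) = ρ * ρ ^ s := by
      rw [Real.rpow_add hρ, Real.rpow_one]
    have h2ns : (2:ℝ) ^ (-s) = ((2:ℝ) ^ s)⁻¹ := by
      rw [Real.rpow_neg (by norm_num)]
    show (1 / (1 - s ^ 2)) * ρ ^ (1 + s) *
      (2 * (Real.cos (Real.arccos (x / ρ) / 2)) ^ (2 * (s + 1))
        - (1 + s) * (Real.cos (Real.arccos (x / ρ) / 2)) ^ (2 * s))
      = (2:ℝ) ^ (-s) / (1 - s ^ 2) * ((ρ + x) ^ s * (x - s * ρ))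
    rw [hchalf, hpow (s+1), hpow s, hTs1, hTs, hρ1s, h2ns]
    have h2s : ((2:ℝ) ^ s) ≠ 0 := (Real.rpow_pos_of_pos (by norm_num) s).ne'
    have hρs : (ρ ^ s) ≠ 0 := (Real.rpow_pos_of_pos hρ s).ne'
    have h1s2 : (1:ℝ) - s ^ 2 ≠ 0 := by nlinarith
    field_simp
    ring

lemma hr_pos (x y : ℝ) (hy : 0 < y) : 0 < Real.sqrt (x ^ 2 + y ^ 2) :=
  Real.sqrt_pos.mpr (by positivity)

lemma hA_pos (x y : ℝ) (hy : 0 < y) : 0 < Real.sqrt (x ^ 2 + y ^ 2) + x := by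
  have h2 : Real.sqrt (x ^ 2 + y ^ 2) ^ 2 = x ^ 2 + y ^ 2 := Real.sq_sqrt (by positivity)
  nlinarith [hr_pos x y hy, neg_abs_le x, abs_nonneg x, sq_abs x]

lemma hasDerivAt_r1 (x y : ℝ) (hy : 0 < y) :
    HasDerivAt (fun t : ℝ => Real.sqrt (t ^ 2 + y ^ 2)) (x / Real.sqrt (x ^ 2 + y ^ 2)) x := by
  have h0 : x ^ 2 + y ^ 2 ≠ 0 := by positivity
  have h1 : HasDerivAt (fun t : ℝ => t ^ 2 + y ^ 2) (2 * x) x := by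
    simpa using (hasDerivAt_pow 2 x).add_const (y ^ 2)
  have h2 := (Real.hasDerivAt_sqrt h0).comp x h1
  refine h2.congr_deriv ?_
  have := hr_pos x y hy
  field_simp

lemma hasDerivAt_r2 (x y : ℝ) (hy : 0 < y) :
    HasDerivAt (fun t : ℝ => Real.sqrt (x ^ 2 + t ^ 2)) (y / Real.sqrt (x ^ 2 + y ^ 2)) y := by
  have h0 : x ^ 2 + y ^ 2 ≠ 0 := by positivity
  have h1 : HasDerivAt (fun t : ℝ => x ^ 2 + t ^ 2) (2 * y) y := by
    simpa using ((hasDerivAt_pow 2 y).const_add (x ^ 2))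
  have h2 := (Real.hasDerivAt_sqrt h0).comp y h1
  refine h2.congr_deriv ?_
  have := hr_pos x y hy
  field_simp

lemma hasDerivAt_A1 (s x y : ℝ) (hy : 0 < y) :
    HasDerivAt (fun t : ℝ => (Real.sqrt (t ^ 2 + y ^ 2) + t) ^ s)
      (s * (Real.sqrt (x ^ 2 + y ^ 2) + x) ^ (s - 1) * (x / Real.sqrt (x ^ 2 + y ^ 2) + 1)) x := by
  have hA := (hasDerivAt_r1 x y hy).add (hasDerivAt_id x)
  have h := hA.rpow_const (p := s) (Or.inl (by simpa using (hA_pos x y hy).ne'))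
  simpa [mul_comm, mul_assoc, mul_left_comm] using h

lemma rpow_sub_one_mul (A s : ℝ) (hA : 0 < A) : A ^ (s - 1) * A = A ^ s := by
  rw [← Real.rpow_add_one hA.ne' (s - 1), sub_add_cancel]

lemma hasDerivAt_F1 (s x y : ℝ) (hs : s ∈ Set.Ioo (0:ℝ) 1) (hy : 0 < y) :
    HasDerivAt (fun t : ℝ => F s (t, y))
      ((2:ℝ) ^ (-s) / (1 - s ^ 2) * ((1 - s ^ 2) * (Real.sqrt (x ^ 2 + y ^ 2) + x) ^ s)) x := by
  obtain ⟨hs0, hs1⟩ := hs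
  have hr := hr_pos x y hy
  have hA := hA_pos x y hy
  have hB : HasDerivAt (fun t : ℝ => t - s * Real.sqrt (t ^ 2 + y ^ 2))
      (1 - s * (x / Real.sqrt (x ^ 2 + y ^ 2))) x :=
    (hasDerivAt_id x).sub ((hasDerivAt_r1 x y hy).const_mul s)
  have h := ((hasDerivAt_A1 s x y hy).mul hB).const_mul ((2:ℝ) ^ (-s) / (1 - s ^ 2))
  have hfun : (fun t : ℝ => F s (t, y)) = fun t : ℝ =>
      (2:ℝ) ^ (-s) / (1 - s ^ 2) * ((Real.sqrt (t ^ 2 + y ^ 2) + t) ^ s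
        * (t - s * Real.sqrt (t ^ 2 + y ^ 2))) := rfl
  rw [hfun]
  refine h.congr_deriv ?_
  rw [← rpow_sub_one_mul (Real.sqrt (x ^ 2 + y ^ 2) + x) s hA]
  have h1s2 : (1:ℝ) - s ^ 2 ≠ 0 := by nlinarith
  field_simp
  ring

lemma pd1_u0 (s x y : ℝ) (hs : s ∈ Set.Ioo (0:ℝ) 1) (hy : 0 < y) :
    pd1 (u₀ s) (x, y)
      = (2:ℝ) ^ (-s) / (1 - s ^ 2) * ((1 - s ^ 2) * (Real.sqrt (x ^ 2 + y ^ 2) + x) ^ s) := by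
  show deriv (fun t : ℝ => u₀ s (t, y)) x = _
  have hfun : (fun t : ℝ => u₀ s (t, y)) = fun t => F s (t, y) :=
    funext fun t => u0_eq_F s hs _
  rw [hfun]
  exact (hasDerivAt_F1 s x y hs hy).deriv

lemma pd1_pd1_u0 (s x y : ℝ) (hs : s ∈ Set.Ioo (0:ℝ) 1) (hy : 0 < y) :
    pd1 (pd1 (u₀ s)) (x, y)
      = (2:ℝ) ^ (-s) / (1 - s ^ 2) * ((1 - s ^ 2) * s * (Real.sqrt (x ^ 2 + y ^ 2) + x) ^ s
          / Real.sqrt (x ^ 2 + y ^ 2)) := by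
  show deriv (fun t : ℝ => pd1 (u₀ s) (t, y)) x = _
  have hfun : (fun t : ℝ => pd1 (u₀ s) (t, y)) = fun t =>
      (2:ℝ) ^ (-s) / (1 - s ^ 2) * ((1 - s ^ 2) * (Real.sqrt (t ^ 2 + y ^ 2) + t) ^ s) :=
    funext fun t => pd1_u0 s t y hs hy
  rw [hfun]
  have h := ((hasDerivAt_A1 s x y hy).const_mul ((1:ℝ) - s ^ 2)).const_mul
    ((2:ℝ) ^ (-s) / (1 - s ^ 2))
  simp only [← mul_assoc] at h ⊢
  rw [h.deriv]
  have hr := hr_pos x y hy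
  rw [← rpow_sub_one_mul (Real.sqrt (x ^ 2 + y ^ 2) + x) s (hA_pos x y hy)]
  field_simp
  ring

lemma hasDerivAt_F2 (s x y : ℝ) (hs : s ∈ Set.Ioo (0:ℝ) 1) (hy : 0 < y) :
    HasDerivAt (fun t : ℝ => F s (x, t))
      (-((2:ℝ) ^ (-s) / (1 - s ^ 2) * (s * (1 + s)))
        * (y * (Real.sqrt (x ^ 2 + y ^ 2) + x) ^ (s - 1))) y := by
  obtain ⟨hs0, hs1⟩ := hs
  have hr := hr_pos x y hy
  have hApos := hA_pos x y hy
  have hrd := hasDerivAt_r2 x y hy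
  have hA : HasDerivAt (fun t : ℝ => (Real.sqrt (x ^ 2 + t ^ 2) + x) ^ s)
      ((y / Real.sqrt (x ^ 2 + y ^ 2)) * s * (Real.sqrt (x ^ 2 + y ^ 2) + x) ^ (s - 1)) y := by
    have := (hrd.add_const x).rpow_const (p := s) (Or.inl (by simpa using hApos.ne'))
    simpa [mul_comm, mul_assoc, mul_left_comm] using this
  have hB : HasDerivAt (fun t : ℝ => x - s * Real.sqrt (x ^ 2 + t ^ 2))
      (-(s * (y / Real.sqrt (x ^ 2 + y ^ 2)))) y :=
    (hrd.const_mul s).const_sub x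
  have h := (hA.mul hB).const_mul ((2:ℝ) ^ (-s) / (1 - s ^ 2))
  have hfun : (fun t : ℝ => F s (x, t)) = fun t : ℝ =>
      (2:ℝ) ^ (-s) / (1 - s ^ 2) * ((Real.sqrt (x ^ 2 + t ^ 2) + x) ^ s
        * (x - s * Real.sqrt (x ^ 2 + t ^ 2))) := rfl
  rw [hfun]
  refine h.congr_deriv ?_
  rw [← rpow_sub_one_mul (Real.sqrt (x ^ 2 + y ^ 2) + x) s hApos]
  have h1s2 : (1:ℝ) - s ^ 2 ≠ 0 := by nlinarith
  field_simp
  ring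

lemma pd2_u0 (s x y : ℝ) (hs : s ∈ Set.Ioo (0:ℝ) 1) (hy : 0 < y) :
    pd2 (u₀ s) (x, y)
      = -((2:ℝ) ^ (-s) / (1 - s ^ 2) * (s * (1 + s)))
        * (y * (Real.sqrt (x ^ 2 + y ^ 2) + x) ^ (s - 1)) := by
  show deriv (fun t : ℝ => u₀ s (x, t)) y = _
  have hfun : (fun t : ℝ => u₀ s (x, t)) = fun t => F s (x, t) :=
    funext fun t => u0_eq_F s hs _
  rw [hfun]
  exact (hasDerivAt_F2 s x y hs hy).deriv

lemma pd2_pd2_u0 (s x y : ℝ) (hs : s ∈ Set.Ioo (0:ℝ) 1) (hy : 0 < y) :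
    pd2 (pd2 (u₀ s)) (x, y)
      = -((2:ℝ) ^ (-s) / (1 - s ^ 2) * (s * (1 + s)))
        * ((Real.sqrt (x ^ 2 + y ^ 2) + x) ^ (s - 1)
          + (s - 1) * y ^ 2 * (Real.sqrt (x ^ 2 + y ^ 2) + x) ^ (s - 2)
            / Real.sqrt (x ^ 2 + y ^ 2)) := by
  show deriv (fun t : ℝ => pd2 (u₀ s) (x, t)) y = _
  have hev : (fun t : ℝ => pd2 (u₀ s) (x, t)) =ᶠ[nhds y] fun t =>
      -((2:ℝ) ^ (-s) / (1 - s ^ 2) * (s * (1 + s)))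
        * (t * (Real.sqrt (x ^ 2 + t ^ 2) + x) ^ (s - 1)) := by
    filter_upwards [Ioi_mem_nhds hy] with t ht
    exact pd2_u0 s x t hs ht
  rw [hev.deriv_eq]
  have hr := hr_pos x y hy
  have hApos := hA_pos x y hy
  have hA1 : HasDerivAt (fun t : ℝ => (Real.sqrt (x ^ 2 + t ^ 2) + x) ^ (s - 1))
      ((y / Real.sqrt (x ^ 2 + y ^ 2)) * (s - 1) * (Real.sqrt (x ^ 2 + y ^ 2) + x) ^ (s - 1 - 1))
      y := by
    have := ((hasDerivAt_r2 x y hy).add_const x).rpow_const (p := s - 1)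
      (Or.inl (by simpa using hApos.ne'))
    simpa [mul_comm, mul_assoc, mul_left_comm] using this
  have h := ((hasDerivAt_id' (x := y)).mul hA1).const_mul
    (-((2:ℝ) ^ (-s) / (1 - s ^ 2) * (s * (1 + s))))
  rw [(show HasDerivAt (fun t : ℝ => -((2:ℝ) ^ (-s) / (1 - s ^ 2) * (s * (1 + s)))
      * (t * (Real.sqrt (x ^ 2 + t ^ 2) + x) ^ (s - 1))) _ y from h).deriv]
  have hs2 : (s - 1 - 1) = s - 2 := by ring
  rw [hs2]
  field_simp

lemma continuous_F (s : ℝ) (hs : s ∈ Set.Ioo (0:ℝ) 1) : Continuous (F s) := by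
  have h1 : Continuous fun p : ℝ × ℝ => Real.sqrt (p.1 ^ 2 + p.2 ^ 2) := by
    apply Real.continuous_sqrt.comp
    fun_prop
  have h2 : Continuous fun p : ℝ × ℝ => (Real.sqrt (p.1 ^ 2 + p.2 ^ 2) + p.1) ^ s :=
    (Real.continuous_rpow_const hs.1.le).comp (h1.add continuous_fst)
  exact continuous_const.mul (h2.mul (continuous_fst.sub (continuous_const.mul h1)))

/-- the blow-up profile `u₀` (i) solves the degenerate Laplace equation
`Δu₀ + (γ/y)∂_y u₀ = 0` in the upper half-plane (γ = 1 − 2s), (ii) extends continuously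
to the closed half-plane minus the origin with boundary values `0` for `x₁ < 0` and
`x₁^{1+s}/(1+s)` for `x₁ > 0`, and (iii) is homogeneous of degree `1+s`. -/
theorem stmt_15 (s γ : ℝ) (hs : s ∈ Set.Ioo (0 : ℝ) 1) (hγ : γ = 1 - 2 * s) :
    (∀ p : ℝ × ℝ, 0 < p.2 →
      pd1 (pd1 (u₀ s)) p + pd2 (pd2 (u₀ s)) p + (γ / p.2) * pd2 (u₀ s) p = 0) ∧
    ContinuousOn (u₀ s) {p : ℝ × ℝ | 0 ≤ p.2 ∧ p ≠ 0} ∧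
    (∀ x : ℝ, x < 0 → u₀ s (x, 0) = 0) ∧
    (∀ x : ℝ, 0 < x → u₀ s (x, 0) = x ^ (1 + s) / (1 + s)) ∧
    (∀ lam : ℝ, 0 < lam → ∀ p : ℝ × ℝ, 0 < p.2 →
      u₀ s (lam * p.1, lam * p.2) = lam ^ (1 + s) * u₀ s p) := by
  obtain ⟨hs0, hs1⟩ := hs
  have hsIoo : s ∈ Set.Ioo (0:ℝ) 1 := ⟨hs0, hs1⟩
  have h1s2 : (1:ℝ) - s ^ 2 ≠ 0 := by nlinarith
  refine ⟨?_, ?_, ?_, ?_, ?_⟩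
  · rintro ⟨x, y⟩ hy
    simp only at hy
    have hr := hr_pos x y hy
    have hApos := hA_pos x y hy
    have hr2 : Real.sqrt (x ^ 2 + y ^ 2) ^ 2 = x ^ 2 + y ^ 2 := Real.sq_sqrt (by positivity)
    rw [pd1_pd1_u0 s x y hsIoo hy, pd2_pd2_u0 s x y hsIoo hy, pd2_u0 s x y hsIoo hy, hγ]
    have hP1 : (Real.sqrt (x ^ 2 + y ^ 2) + x) ^ (s - 2) * (Real.sqrt (x ^ 2 + y ^ 2) + x)
        = (Real.sqrt (x ^ 2 + y ^ 2) + x) ^ (s - 1) := by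
      have := rpow_sub_one_mul (Real.sqrt (x ^ 2 + y ^ 2) + x) (s - 1) hApos
      rwa [show s - 1 - 1 = s - 2 by ring] at this
    have hP0 : (Real.sqrt (x ^ 2 + y ^ 2) + x) ^ (s - 1) * (Real.sqrt (x ^ 2 + y ^ 2) + x)
        = (Real.sqrt (x ^ 2 + y ^ 2) + x) ^ s :=
      rpow_sub_one_mul (Real.sqrt (x ^ 2 + y ^ 2) + x) s hApos
    rw [← hP0, ← hP1]
    set r := Real.sqrt (x ^ 2 + y ^ 2) with hrdef
    set q := (r + x) ^ (s - 2) with hqdef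
    rw [show y ^ 2 = r ^ 2 - x ^ 2 by linarith]
    field_simp
    ring
  · have := (continuous_F s hsIoo).continuousOn (s := {p : ℝ × ℝ | 0 ≤ p.2 ∧ p ≠ 0})
    exact ContinuousOn.congr this fun p _ => u0_eq_F s hsIoo p
  · intro x hx
    rw [u0_eq_F s hsIoo]
    have h1 : Real.sqrt (x ^ 2 + (0:ℝ) ^ 2) = -x := by
      rw [show x ^ 2 + (0:ℝ) ^ 2 = (-x) ^ 2 by ring, Real.sqrt_sq (by linarith)]
    simp only [F, h1]
    rw [show -x + x = 0 by ring, Real.zero_rpow hs0.ne']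
    ring
  · intro x hx
    rw [u0_eq_F s hsIoo]
    have h1 : Real.sqrt (x ^ 2 + (0:ℝ) ^ 2) = x := by
      rw [show x ^ 2 + (0:ℝ) ^ 2 = x ^ 2 by ring, Real.sqrt_sq hx.le]
    simp only [F, h1]
    have h2 : (x + x) ^ s = (2:ℝ) ^ s * x ^ s := by
      rw [show x + x = 2 * x by ring, Real.mul_rpow (by norm_num) hx.le]
    have h3 : x ^ (1 + s) = x * x ^ s := by
      rw [Real.rpow_add hx, Real.rpow_one]
    have h4 : (2:ℝ) ^ (-s) * (2:ℝ) ^ s = 1 := by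
      rw [← Real.rpow_add (by norm_num), neg_add_cancel, Real.rpow_zero]
    have h1ps : (1:ℝ) + s ≠ 0 := by linarith
    rw [h2, h3]
    field_simp
    linear_combination (1 - s ^ 2) * h4
  · intro lam hlam p hp
    obtain ⟨x, y⟩ := p
    simp only at hp
    rw [u0_eq_F s hsIoo, u0_eq_F s hsIoo]
    have hr := hr_pos x y hp
    have hApos := hA_pos x y hp
    have h1 : Real.sqrt ((lam * x) ^ 2 + (lam * y) ^ 2)
        = lam * Real.sqrt (x ^ 2 + y ^ 2) := by
      rw [show (lam * x) ^ 2 + (lam * y) ^ 2 = lam ^ 2 * (x ^ 2 + y ^ 2) by ring,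
        Real.sqrt_mul (by positivity), Real.sqrt_sq hlam.le]
    simp only [F, h1]
    have h2 : (lam * Real.sqrt (x ^ 2 + y ^ 2) + lam * x) ^ s
        = lam ^ s * (Real.sqrt (x ^ 2 + y ^ 2) + x) ^ s := by
      rw [show lam * Real.sqrt (x ^ 2 + y ^ 2) + lam * x
          = lam * (Real.sqrt (x ^ 2 + y ^ 2) + x) by ring,
        Real.mul_rpow hlam.le hApos.le]
    have h3 : lam ^ (1 + s) = lam * lam ^ s := by
      rw [Real.rpow_add hlam, Real.rpow_one]
    rw [h2, h3]
    ring
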